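/- For an odd positive integer n and an integer k, define G_k(n) = ((1−i)/2 + (−1/n)·(1+i)/2) · Σ_{a mod n} (a/n)·e(ak/n), where (a/n) is the Jacobi symbol, (−1/n) = (−1)^{(n−1)/2}, e(x) = e^{2πix}, and the sum is over residues a modulo n. Then for any two coprime odd positive integers m and n and any integer k, G_k(mn) = G_k(m)·G_k(n). -/

import Mathlib

open Finset

/-- The Gauss-type sum
`G_k(n) = ((1-i)/2 + (−1/n)(1+i)/2) · Σ_{a mod n} (a/n) e(ak/n)`
from Soundararajan's work, where `(·/n)` is the Jacobi symbol and `e(x) = e^{2πix}`. -/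
noncomputable def Gk (k : ℤ) (n : ℕ) : ℂ :=
  ((1 - Complex.I) / 2 + (jacobiSym (-1) n : ℂ) * (1 + Complex.I) / 2) *
    ∑ a ∈ Finset.range n,
      (jacobiSym (a : ℤ) n : ℂ) * Complex.exp (2 * Real.pi * Complex.I * a * k / n)

/-- The epsilon factor. -/
noncomputable def GkEps (n : ℕ) : ℂ :=
  (1 - Complex.I) / 2 + (jacobiSym (-1) n : ℂ) * (1 + Complex.I) / 2

/-- The plain sum. -/
noncomputable def GkSum (k : ℤ) (n : ℕ) : ℂ :=
  ∑ a ∈ Finset.range n,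
    (jacobiSym (a : ℤ) n : ℂ) * Complex.exp (2 * Real.pi * Complex.I * a * k / n)

lemma Gk_eq (k : ℤ) (n : ℕ) : Gk k n = GkEps n * GkSum k n := by
  rw [Gk, GkEps, GkSum, mul_div_assoc]

lemma exp_mod (N : ℕ) (hN : N ≠ 0) (x : ℕ) (k : ℤ) :
    Complex.exp (2 * Real.pi * Complex.I * ((x % N : ℕ) : ℂ) * k / N)
      = Complex.exp (2 * Real.pi * Complex.I * (x : ℂ) * k / N) := by
  have hNC : (N : ℂ) ≠ 0 := Nat.cast_ne_zero.mpr hN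
  set q : ℕ := x / N with hq
  have hx : ((x % N : ℕ) : ℂ) + (N : ℂ) * (q : ℂ) = (x : ℂ) := by
    exact_mod_cast congrArg (Nat.cast : ℕ → ℂ) (Nat.mod_add_div x N)
  rw [show (2 * Real.pi * Complex.I * (x : ℂ) * k / N)
      = 2 * Real.pi * Complex.I * ((x % N : ℕ) : ℂ) * k / N
        + (((q : ℤ) * k : ℤ) : ℂ) * (2 * Real.pi * Complex.I) from by
    rw [← hx]; push_cast; field_simp]
  rw [Complex.exp_add, Complex.exp_int_mul_two_pi_mul_I, mul_one]

lemma jacobi_mod (N : ℕ) (x : ℕ) :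
    jacobiSym ((x % N : ℕ) : ℤ) N = jacobiSym (x : ℤ) N := by
  rw [jacobiSym.mod_left (x : ℤ) N]
  congr 1

lemma GkSum_mul (m n : ℕ) (hm0 : 0 < m) (hn0 : 0 < n)
    (hmn : Nat.Coprime m n) (k : ℤ) :
    GkSum k (m * n)
      = ((jacobiSym n m * jacobiSym m n : ℤ) : ℂ) * (GkSum k m * GkSum k n) := by
  haveI : NeZero m := ⟨hm0.ne'⟩
  haveI : NeZero n := ⟨hn0.ne'⟩
  have hN0 : 0 < m * n := Nat.mul_pos hm0 hn0
  set N := m * n with hN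
  set f : ℕ → ℂ := fun a =>
    (jacobiSym (a : ℤ) N : ℂ) * Complex.exp (2 * Real.pi * Complex.I * a * k / N) with hf
  set i : ℕ × ℕ → ℕ := fun p => (p.1 * n + p.2 * m) % N with hi
  set P : Finset (ℕ × ℕ) := Finset.range m ×ˢ Finset.range n with hP
  -- injectivity
  have hinj : ∀ p ∈ P, ∀ q ∈ P, i p = i q → p = q := by
    rintro ⟨b, c⟩ hp ⟨b', c'⟩ hq hEq
    rw [hP, Finset.mem_product, Finset.mem_range, Finset.mem_range] at hp hq
    have hmod : b * n + c * m ≡ b' * n + c' * m [MOD N] := hEq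
    have hb : b = b' := by
      have h1 : b * n + c * m ≡ b' * n + c' * m [MOD m] := hmod.of_mul_right n
      have h2 : b * n ≡ b' * n [MOD m] := by
        have e : ∀ x y : ℕ, (x * n + y * m) % m = x * n % m := fun x y =>
          Nat.add_mul_mod_self_right _ _ _
        unfold Nat.ModEq at h1 ⊢
        rw [e b c, e b' c'] at h1
        exact h1
      have h3 : b ≡ b' [MOD m] := Nat.ModEq.cancel_right_of_coprime hmn h2
      unfold Nat.ModEq at h3
      rwa [Nat.mod_eq_of_lt hp.1, Nat.mod_eq_of_lt hq.1] at h3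
    have hc : c = c' := by
      have h1 : b * n + c * m ≡ b' * n + c' * m [MOD n] := hmod.of_mul_left m
      have h2 : c * m ≡ c' * m [MOD n] := by
        have e : ∀ x y : ℕ, (x * n + y * m) % n = y * m % n := fun x y => by
          rw [add_comm]; exact Nat.add_mul_mod_self_right _ _ _
        unfold Nat.ModEq at h1 ⊢
        rw [e b c, e b' c'] at h1
        exact h1
      have h3 : c ≡ c' [MOD n] := Nat.ModEq.cancel_right_of_coprime hmn.symm h2
      unfold Nat.ModEq at h3
      rwa [Nat.mod_eq_of_lt hp.2, Nat.mod_eq_of_lt hq.2] at h3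
    simp [hb, hc]
  -- image
  have himg : P.image i = Finset.range N := by
    apply Finset.eq_of_subset_of_card_le
    · intro a ha
      rw [Finset.mem_image] at ha
      obtain ⟨p, _, rfl⟩ := ha
      exact Finset.mem_range.mpr (Nat.mod_lt _ hN0)
    · rw [Finset.card_image_of_injOn fun p hp q hq h => hinj p hp q hq h,
        Finset.card_range, hP, Finset.card_product, Finset.card_range, Finset.card_range]
  -- per-term computation
  have hterm : ∀ b ∈ Finset.range m, ∀ c ∈ Finset.range n,
      f ((b * n + c * m) % N)
        = ((jacobiSym n m * jacobiSym m n : ℤ) : ℂ) *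
          (((jacobiSym b m : ℂ) * Complex.exp (2 * Real.pi * Complex.I * b * k / m)) *
           ((jacobiSym c n : ℂ) * Complex.exp (2 * Real.pi * Complex.I * c * k / n))) := by
    intro b _ c _
    have hfx : f ((b * n + c * m) % N) = f (b * n + c * m) := by
      rw [hf]
      simp only
      rw [jacobi_mod, exp_mod N hN0.ne']
    rw [hfx, hf]
    simp only
    have hjac : (jacobiSym ((b * n + c * m : ℕ) : ℤ) N : ℂ)
        = (jacobiSym n m : ℂ) * (jacobiSym b m : ℂ) *
          ((jacobiSym m n : ℂ) * (jacobiSym c n : ℂ)) := by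
      rw [hN, jacobiSym.mul_right]
      have h1 : jacobiSym ((b * n + c * m : ℕ) : ℤ) m = jacobiSym n m * jacobiSym b m := by
        have : jacobiSym ((b * n + c * m : ℕ) : ℤ) m = jacobiSym ((b : ℤ) * n) m := by
          apply jacobiSym.mod_left'
          push_cast
          simp [Int.add_mul_emod_self_right]
        rw [this, mul_comm (b : ℤ), jacobiSym.mul_left]
      have h2 : jacobiSym ((b * n + c * m : ℕ) : ℤ) n = jacobiSym m n * jacobiSym c n := by
        have : jacobiSym ((b * n + c * m : ℕ) : ℤ) n = jacobiSym ((c : ℤ) * m) n := by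
          apply jacobiSym.mod_left'
          push_cast
          rw [add_comm]
          simp [Int.add_mul_emod_self_right]
        rw [this, mul_comm (c : ℤ), jacobiSym.mul_left]
      rw [h1, h2]
      push_cast
      ring
    have hexp : Complex.exp (2 * Real.pi * Complex.I * ((b * n + c * m : ℕ) : ℂ) * k / N)
        = Complex.exp (2 * Real.pi * Complex.I * b * k / m) *
          Complex.exp (2 * Real.pi * Complex.I * c * k / n) := by
      rw [← Complex.exp_add]
      congr 1
      have hmC : (m : ℂ) ≠ 0 := Nat.cast_ne_zero.mpr hm0.ne'
      have hnC : (n : ℂ) ≠ 0 := Nat.cast_ne_zero.mpr hn0.ne'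
      rw [hN]
      push_cast
      field_simp
    rw [hjac, hexp]
    push_cast
    ring
  -- assemble
  calc GkSum k N = ∑ a ∈ Finset.range N, f a := rfl
    _ = ∑ a ∈ P.image i, f a := by rw [himg]
    _ = ∑ p ∈ P, f (i p) := Finset.sum_image hinj
    _ = ∑ p ∈ P, ((jacobiSym n m * jacobiSym m n : ℤ) : ℂ) *
          (((jacobiSym p.1 m : ℂ) * Complex.exp (2 * Real.pi * Complex.I * p.1 * k / m)) *
           ((jacobiSym p.2 n : ℂ) * Complex.exp (2 * Real.pi * Complex.I * p.2 * k / n))) := by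
        refine Finset.sum_congr rfl ?_
        rintro ⟨b, c⟩ hp
        rw [hP, Finset.mem_product] at hp
        exact hterm b hp.1 c hp.2
    _ = ((jacobiSym n m * jacobiSym m n : ℤ) : ℂ) * (GkSum k m * GkSum k n) := by
        rw [← Finset.mul_sum]
        congr 1
        rw [GkSum, GkSum, Finset.sum_mul_sum, ← Finset.sum_product']

lemma GkEps_mul (m n : ℕ) (hm : Odd m) (hn : Odd n) (hm0 : 0 < m) (hn0 : 0 < n)
    (hmn : Nat.Coprime m n) :
    GkEps (m * n) * ((jacobiSym n m * jacobiSym m n : ℤ) : ℂ) = GkEps m * GkEps n := by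
  haveI : NeZero m := ⟨hm0.ne'⟩
  haveI : NeZero n := ⟨hn0.ne'⟩
  have hgcd : Int.gcd (n : ℤ) (m : ℤ) = 1 := by
    rw [Int.gcd_natCast_natCast]; exact hmn.symm
  have hm2 : m % 2 = 1 := Nat.odd_iff.mp hm
  have hn2 : n % 2 = 1 := Nat.odd_iff.mp hn
  have hmn2 : Odd (m * n) := hm.mul hn
  rw [GkEps, GkEps, GkEps, jacobiSym.mul_right,
    jacobiSym.at_neg_one hm, jacobiSym.at_neg_one hn]
  have hm4 : m % 4 = 1 ∨ m % 4 = 3 := by omega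
  have hn4 : n % 4 = 1 ∨ n % 4 = 3 := by omega
  rcases hm4 with h1 | h3 <;> rcases hn4 with h1' | h3'
  · rw [ZMod.χ₄_nat_one_mod_four h1, ZMod.χ₄_nat_one_mod_four h1',
      jacobiSym.quadratic_reciprocity_one_mod_four h1 hn]
    rw [show jacobiSym n m * jacobiSym n m = jacobiSym n m ^ 2 from (sq _).symm,
      jacobiSym.sq_one hgcd]
    push_cast
    ring
  · rw [ZMod.χ₄_nat_one_mod_four h1, ZMod.χ₄_nat_three_mod_four h3',
      jacobiSym.quadratic_reciprocity_one_mod_four h1 hn]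
    rw [show jacobiSym n m * jacobiSym n m = jacobiSym n m ^ 2 from (sq _).symm,
      jacobiSym.sq_one hgcd]
    push_cast
    ring
  · rw [ZMod.χ₄_nat_three_mod_four h3, ZMod.χ₄_nat_one_mod_four h1',
      jacobiSym.quadratic_reciprocity_one_mod_four' hm h1']
    rw [show jacobiSym n m * jacobiSym n m = jacobiSym n m ^ 2 from (sq _).symm,
      jacobiSym.sq_one hgcd]
    push_cast
    ring
  · rw [ZMod.χ₄_nat_three_mod_four h3, ZMod.χ₄_nat_three_mod_four h3',
      jacobiSym.quadratic_reciprocity_three_mod_four h3 h3']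
    rw [show jacobiSym n m * -jacobiSym n m = -(jacobiSym n m ^ 2) from by ring,
      jacobiSym.sq_one hgcd]
    push_cast
    linear_combination -Complex.I_sq

/-- **Multiplicativity of `G_k`:** for coprime odd positive integers `m, n`,
`G_k(mn) = G_k(m)·G_k(n)`. -/
theorem Gk_mul (m n : ℕ) (hm : Odd m) (hm0 : 0 < m) (hn : Odd n) (hn0 : 0 < n)
    (hmn : Nat.Coprime m n) (k : ℤ) :
    Gk k (m * n) = Gk k m * Gk k n := by
  rw [Gk_eq, Gk_eq, Gk_eq, GkSum_mul m n hm0 hn0 hmn k,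
    show GkEps (m * n) * (((jacobiSym n m * jacobiSym m n : ℤ) : ℂ) * (GkSum k m * GkSum k n))
      = (GkEps (m * n) * ((jacobiSym n m * jacobiSym m n : ℤ) : ℂ)) * (GkSum k m * GkSum k n)
      from by ring,
    GkEps_mul m n hm hn hm0 hn0 hmn]
  ring
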